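/- Along any solution of the Cucker–Smale system for N agents in ℝ^d, the velocity variance satisfies the dissipation identity d/dt V(t) = −(1/N²)·Σ_{i,j=1}^N a(‖x_j(t) − x_i(t)‖)·‖v_i(t) − v_j(t)‖², and in particular V is nonincreasing: d/dt V(t) ≤ 0 for all t. -/

import Mathlib

open scoped RealInnerProductSpace BigOperators

/-- Pure algebraic dissipation identity for symmetric weights. -/
lemma cs_key_alg {E : Type*} [NormedAddCommGroup E] [InnerProductSpace ℝ E]
    {N : ℕ} (hN : 0 < N) (u : Fin N → E) (A : Fin N → Fin N → ℝ)
    (hA : ∀ i j, A i j = A j i) :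
    (1 / (2 * (N : ℝ) ^ 2)) * ∑ i, ∑ j,
      (⟪u i - u j, ((N : ℝ)⁻¹ • ∑ k, A i k • (u k - u i)) - ((N : ℝ)⁻¹ • ∑ k, A j k • (u k - u j))⟫
        + ⟪((N : ℝ)⁻¹ • ∑ k, A i k • (u k - u i)) - ((N : ℝ)⁻¹ • ∑ k, A j k • (u k - u j)), u i - u j⟫)
    = -(1 / (N : ℝ) ^ 2) * ∑ i, ∑ j, A i j * ‖u i - u j‖ ^ 2 := by
  have hNne : (N : ℝ) ≠ 0 := Nat.cast_ne_zero.mpr hN.ne'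
  set F : Fin N → E := fun i => (N : ℝ)⁻¹ • ∑ k, A i k • (u k - u i) with hFdef
  -- ∑ F = 0
  have hT : (∑ i, ∑ k, A i k • (u k - u i)) = 0 := by
    have hswap : (∑ i, ∑ k, A i k • (u k - u i)) = ∑ i, ∑ k, A i k • (u i - u k) := by
      rw [Finset.sum_comm]
      exact Finset.sum_congr rfl fun i _ => Finset.sum_congr rfl fun k _ => by rw [hA]
    have h2 : (∑ i, ∑ k, A i k • (u k - u i)) + (∑ i, ∑ k, A i k • (u k - u i)) = 0 := by
      nth_rewrite 2 [hswap]
      rw [← Finset.sum_add_distrib]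
      refine Finset.sum_eq_zero fun i _ => ?_
      rw [← Finset.sum_add_distrib]
      refine Finset.sum_eq_zero fun k _ => ?_
      rw [← smul_add]; simp
    have h3 : (2 : ℝ) • (∑ i, ∑ k, A i k • (u k - u i)) = 0 := by
      rw [two_smul]; exact h2
    exact (smul_eq_zero.mp h3).resolve_left (by norm_num)
  have hFsum : (∑ i, F i) = 0 := by
    simp only [hFdef, ← Finset.smul_sum, hT, smul_zero]
  -- S0 := ∑ i ∑ j ⟪u i - u j, F i⟫
  have hS0 : (∑ i, ∑ j, ⟪u i - u j, F i⟫) = -(1/2) * ∑ i, ∑ j, A i j * ‖u i - u j‖ ^ 2 := by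
    have h1 : (∑ i, ∑ j, ⟪u i - u j, F i⟫) = (N : ℝ) * ∑ i, ⟪u i, F i⟫ := by
      have hrow : ∀ i : Fin N, (∑ j, ⟪u i - u j, F i⟫)
          = (N : ℝ) * ⟪u i, F i⟫ - ⟪∑ j, u j, F i⟫ := by
        intro i
        rw [sum_inner]
        simp only [inner_sub_left]
        rw [Finset.sum_sub_distrib, Finset.sum_const, Finset.card_univ, Fintype.card_fin,
          nsmul_eq_mul]
      rw [Finset.sum_congr rfl fun i _ => hrow i, Finset.sum_sub_distrib, ← Finset.mul_sum,
        ← inner_sum, hFsum, inner_zero_right, sub_zero]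
    have h2 : (N : ℝ) * ∑ i, ⟪u i, F i⟫ = ∑ i, ∑ k, A i k * ⟪u i, u k - u i⟫ := by
      have : ∀ i : Fin N, ⟪u i, F i⟫ = (N : ℝ)⁻¹ * ∑ k, A i k * ⟪u i, u k - u i⟫ := by
        intro i
        rw [hFdef]
        simp only [inner_smul_right, inner_sum, real_inner_smul_right]
      rw [Finset.sum_congr rfl fun i _ => this i, ← Finset.mul_sum, ← mul_assoc,
        mul_inv_cancel₀ hNne, one_mul]
    have hswap : (∑ i, ∑ k, A i k * ⟪u i, u k - u i⟫)
        = ∑ i, ∑ k, A i k * ⟪u k, u i - u k⟫ := by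
      rw [Finset.sum_comm]
      exact Finset.sum_congr rfl fun i _ => Finset.sum_congr rfl fun k _ => by rw [hA]
    have hpt : ∀ y z : E, ⟪y, z - y⟫ + ⟪z, y - z⟫ = -‖y - z‖ ^ 2 := by
      intro y z
      have h := real_inner_self_eq_norm_sq (y - z)
      simp only [inner_sub_left, inner_sub_right] at h ⊢
      have hc := real_inner_comm y z
      linarith
    have hdouble : (∑ i, ∑ k, A i k * ⟪u i, u k - u i⟫)
        + (∑ i, ∑ k, A i k * ⟪u i, u k - u i⟫)
        = -∑ i, ∑ k, A i k * ‖u i - u k‖ ^ 2 := by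
      nth_rewrite 2 [hswap]
      rw [← Finset.sum_add_distrib, ← Finset.sum_neg_distrib]
      refine Finset.sum_congr rfl fun i _ => ?_
      rw [← Finset.sum_add_distrib, ← Finset.sum_neg_distrib]
      refine Finset.sum_congr rfl fun k _ => ?_
      rw [← mul_add, hpt, mul_neg]
    rw [h1, h2]
    linarith [hdouble]
  -- S0' = -S0
  have hS0' : (∑ i, ∑ j, ⟪u i - u j, F j⟫) = -∑ i, ∑ j, ⟪u i - u j, F i⟫ := by
    rw [Finset.sum_comm, ← Finset.sum_neg_distrib]
    refine Finset.sum_congr rfl fun i _ => ?_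
    rw [← Finset.sum_neg_distrib]
    refine Finset.sum_congr rfl fun j _ => ?_
    rw [← inner_neg_left, neg_sub]
  -- assemble
  have hB : (∑ i, ∑ j, (⟪u i - u j, F i - F j⟫ + ⟪F i - F j, u i - u j⟫))
      = 4 * ∑ i, ∑ j, ⟪u i - u j, F i⟫ := by
    have : ∀ i j : Fin N, ⟪u i - u j, F i - F j⟫ + ⟪F i - F j, u i - u j⟫
        = 2 * ⟪u i - u j, F i⟫ - 2 * ⟪u i - u j, F j⟫ := by
      intro i j
      simp only [inner_sub_left, inner_sub_right]
      linarith [real_inner_comm (u i) (F i), real_inner_comm (u i) (F j),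
        real_inner_comm (u j) (F i), real_inner_comm (u j) (F j)]
    calc (∑ i, ∑ j, (⟪u i - u j, F i - F j⟫ + ⟪F i - F j, u i - u j⟫))
        = ∑ i, ∑ j, (2 * ⟪u i - u j, F i⟫ - 2 * ⟪u i - u j, F j⟫) := by
          exact Finset.sum_congr rfl fun i _ => Finset.sum_congr rfl fun j _ => this i j
      _ = (∑ i, ∑ j, 2 * ⟪u i - u j, F i⟫) - ∑ i, ∑ j, 2 * ⟪u i - u j, F j⟫ := by
          simp [Finset.sum_sub_distrib]
      _ = 2 * (∑ i, ∑ j, ⟪u i - u j, F i⟫) - 2 * ∑ i, ∑ j, ⟪u i - u j, F j⟫ := by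
          simp [Finset.mul_sum]
      _ = 4 * ∑ i, ∑ j, ⟪u i - u j, F i⟫ := by rw [hS0']; ring
  rw [hB, hS0]
  have hN2 : (N : ℝ) ^ 2 ≠ 0 := pow_ne_zero _ hNne
  field_simp
  ring

/-- Along any solution of the Cucker–Smale system, the velocity
variance satisfies `d/dt V(t) = −(1/N²)·Σ_{i,j} a(‖x_j − x_i‖)·‖v_i − v_j‖²`, and in
particular `V` is nonincreasing: `d/dt V(t) ≤ 0` for all `t`. -/
theorem cucker_smale_variance_dissipation
    {d N : ℕ} (hN : 0 < N)
    (a : ℝ → ℝ)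
    (ha_pos : ∀ s, 0 ≤ s → 0 < a s)
    (ha_anti : AntitoneOn a (Set.Ici 0))
    (ha_smooth : ContDiffOn ℝ 1 a (Set.Ici 0))
    (x v : ℝ → Fin N → EuclideanSpace ℝ (Fin d))
    (hx : ∀ i t, HasDerivAt (fun s => x s i) (v t i) t)
    (hv : ∀ i t, HasDerivAt (fun s => v s i)
      ((N : ℝ)⁻¹ • ∑ j, a ‖x t j - x t i‖ • (v t j - v t i)) t)
    (V : ℝ → ℝ)
    (hV : ∀ t, V t = (1 / (2 * (N : ℝ) ^ 2)) * ∑ i, ∑ j, ‖v t i - v t j‖ ^ 2) :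
    (∀ t : ℝ, HasDerivAt V
      (-(1 / (N : ℝ) ^ 2) * ∑ i, ∑ j, a ‖x t j - x t i‖ * ‖v t i - v t j‖ ^ 2) t) ∧
    (∀ t : ℝ, deriv V t ≤ 0) := by
  have key : ∀ t : ℝ, HasDerivAt V
      (-(1 / (N : ℝ) ^ 2) * ∑ i, ∑ j, a ‖x t j - x t i‖ * ‖v t i - v t j‖ ^ 2) t := by
    intro t
    set A : Fin N → Fin N → ℝ := fun i j => a ‖x t j - x t i‖ with hAdef
    set F : Fin N → EuclideanSpace ℝ (Fin d) :=
      fun i => (N : ℝ)⁻¹ • ∑ k, A i k • (v t k - v t i) with hFdef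
    have hVeq : V = fun s => (1 / (2 * (N : ℝ) ^ 2)) * ∑ i, ∑ j, ⟪v s i - v s j, v s i - v s j⟫ := by
      funext s
      rw [hV s]
      congr 1
      exact Finset.sum_congr rfl fun i _ => Finset.sum_congr rfl fun j _ =>
        (real_inner_self_eq_norm_sq _).symm
    have hsum : HasDerivAt
        (fun s => ∑ i, ∑ j, (⟪v s i - v s j, v s i - v s j⟫ : ℝ))
        (∑ i, ∑ j, (⟪v t i - v t j, F i - F j⟫ + ⟪F i - F j, v t i - v t j⟫)) t := by
      refine HasDerivAt.fun_sum fun i _ => HasDerivAt.fun_sum fun j _ => ?_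
      have hw : HasDerivAt (fun s => v s i - v s j) (F i - F j) t := (hv i t).sub (hv j t)
      exact hw.inner ℝ hw
    have hderiv := hsum.const_mul (1 / (2 * (N : ℝ) ^ 2))
    rw [← hVeq] at hderiv
    have halg := cs_key_alg (E := EuclideanSpace ℝ (Fin d)) hN (v t) A
      (fun i j => by simp only [hAdef, norm_sub_rev])
    rw [← halg]
    exact hderiv
  refine ⟨key, fun t => ?_⟩
  rw [(key t).deriv]
  apply mul_nonpos_of_nonpos_of_nonneg
  · have h : (0:ℝ) ≤ 1 / (N:ℝ)^2 := by positivity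
    linarith
  · refine Finset.sum_nonneg fun i _ => Finset.sum_nonneg fun j _ => ?_
    exact mul_nonneg (ha_pos _ (norm_nonneg _)).le (sq_nonneg _)
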